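/- arXiv:1912.09122 — 4 statements merged into one kernel-verified Lean document; each statement's English description precedes it below -/
import Mathlib

section
/- Let V be a minuscule representation of a simple complex Lie algebra g, and let i, j be indices of simple roots with Cartan integer a_{ij} = ⟨α_j, α_i∨⟩ = −1. Then for every v ∈ V, e_i e_j e_i · v = 0 and f_i f_j f_i · v = 0. -/
open LieAlgebra LieModule

section Aux

/-- Key quadratic-form computation. -/
lemma keyQ_aux {M : Type*} [AddCommGroup M] [Module ℂ M]
    (Q : LinearMap.BilinForm ℂ M) (hsym : ∀ x y, Q x y = Q y x) (A B X : M)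
    (h1 : Q (X + A) (X + A) = Q X X)
    (h2 : Q (X + A + B) (X + A + B) = Q X X)
    (h3 : Q (X + A + A + B) (X + A + A + B) = Q X X)
    (hpair : 2 * Q A B = -(Q A A)) : Q A A = 0 := by
  simp only [map_add, LinearMap.add_apply] at h1 h2 h3
  linear_combination h3 - h2 - h1 - hsym B A - hpair

/-- Pairing vs RootForm. -/
lemma pairingQ_aux {ι R M N : Type*} [Fintype ι] [CommRing R] [AddCommGroup M] [Module R M]
    [AddCommGroup N] [Module R N] (P : RootPairing ι R M N) (i j : ι) :
    P.RootForm (P.root i) (P.root i) * P.pairing j i = 2 * P.RootForm (P.root i) (P.root j) := by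
  have h := congrArg (P.root' j) (P.rootForm_self_smul_coroot i)
  simpa [map_smul, map_sum, smul_eq_mul, RootPairing.Polarization_apply,
    P.rootForm_apply_apply, Finset.mul_sum, mul_comm, mul_left_comm] using h

lemma rootForm_self_ne_zero_aux {ι M N : Type*} [Fintype ι] [AddCommGroup M] [Module ℂ M]
    [AddCommGroup N] [Module ℂ N] (P : RootPairing ι ℂ M N)
    (hP : P.IsCrystallographic) (i : ι) :
    P.RootForm (P.root i) (P.root i) ≠ 0 := by
  have h : ∀ i j, ∃ z : ℤ, (z : ℂ) = P.pairing i j := fun i j => by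
    simpa using hP.exists_value i j
  choose z hz using fun j => h i j
  have hzi : z i = 2 := by
    have := hz i
    rw [P.pairing_same] at this
    exact_mod_cast this
  have hQ : P.RootForm (P.root i) (P.root i) = ((∑ j, z j * z j : ℤ) : ℂ) := by
    rw [P.rootForm_root_self]
    push_cast
    exact Finset.sum_congr rfl fun j _ => by rw [hz j]
  rw [hQ]
  have h4 : z i * z i ≤ ∑ j, z j * z j :=
    Finset.single_le_sum (fun j _ => mul_self_nonneg (z j)) (Finset.mem_univ i)
  rw [hzi] at h4
  exact_mod_cast (by omega : (∑ j, z j * z j : ℤ) ≠ 0)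

end Aux


/-- The Weyl group of the pair `(g, H)`: the group of linear automorphisms of
`H*` generated by the reflections in the roots of `(g, H)`. -/
noncomputable def weylGroup (g : Type*) [LieRing g] [LieAlgebra ℂ g]
    [LieAlgebra.IsKilling ℂ g] [FiniteDimensional ℂ g]
    (H : LieSubalgebra ℂ g) [H.IsCartanSubalgebra] :
    Subgroup ((Module.Dual ℂ H) ≃ₗ[ℂ] (Module.Dual ℂ H)) :=
  Subgroup.closure {w | ∃ (α : Weight ℂ H g) (hα : α.IsNonZero),
    w = Module.reflection
      (f := Module.Dual.eval ℂ ↥H (IsKilling.coroot α))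
      (x := Weight.toLinear ℂ H g α)
      (by simpa using IsKilling.root_apply_coroot hα)}

lemma weylGroup_rootForm_invariant (g : Type*) [LieRing g] [LieAlgebra ℂ g]
    [LieAlgebra.IsSimple ℂ g] [LieAlgebra.IsKilling ℂ g] [FiniteDimensional ℂ g]
    (H : LieSubalgebra ℂ g) [H.IsCartanSubalgebra]
    {w : (Module.Dual ℂ H) ≃ₗ[ℂ] (Module.Dual ℂ H)} (hw : w ∈ weylGroup g H) :
    ∀ x, (IsKilling.rootSystem H).RootForm (w x) (w x) =
      (IsKilling.rootSystem H).RootForm x x := by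
  induction hw using Subgroup.closure_induction with
  | mem w hw =>
    obtain ⟨γ, hγ, rfl⟩ := hw
    intro x
    have hmem : γ ∈ H.root := by simpa [LieSubalgebra.root] using hγ
    have heq : (Module.reflection
        (f := Module.Dual.eval ℂ ↥H (IsKilling.coroot γ))
        (x := Weight.toLinear ℂ H g γ)
        (by simpa using IsKilling.root_apply_coroot hγ)) =
        (IsKilling.rootSystem H).reflection ⟨γ, hmem⟩ := by
      ext y
      simp [Module.reflection_apply, RootPairing.reflection_apply]
    rw [heq]
    exact (IsKilling.rootSystem H).rootForm_reflection_reflection_apply ⟨γ, hmem⟩ x x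
  | one => intro x; simp
  | mul w₁ w₂ _ _ h₁ h₂ =>
    intro x
    have : (w₁ * w₂) x = w₁ (w₂ x) := rfl
    rw [this, h₁, h₂]
  | inv w _ h =>
    intro x
    have hx : w (w⁻¹ x) = x := by
      show w (w.symm x) = x
      simp
    conv_rhs => rw [← hx]
    rw [h]


/-- **A Serre-type vanishing on minuscule representations.**
Let `V` be a minuscule irreducible representation of a simple complex Lie
algebra `g`, let `α, β` be simple roots with Cartan integer
`a_{αβ} = ⟨β, α∨⟩ = -1`, and let `(eα, fα)` resp. `(eβ, fβ)` be Chevalley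
generators attached to `α` resp. `β`.  Then for every `v ∈ V`,
`eα eβ eα ⬝ v = 0` and `fα fβ fα ⬝ v = 0`. -/
theorem serre_type_vanishing_on_minuscule
    (g : Type*) [LieRing g] [LieAlgebra ℂ g] [LieAlgebra.IsSimple ℂ g]
    [LieAlgebra.IsKilling ℂ g] [FiniteDimensional ℂ g]
    (H : LieSubalgebra ℂ g) [H.IsCartanSubalgebra]
    (V : Type*) [AddCommGroup V] [Module ℂ V] [LieRingModule g V] [LieModule ℂ g V]
    [FiniteDimensional ℂ V] [LieModule.IsIrreducible ℂ g V]
    (hminuscule : ∀ χ₁ χ₂ : Module.Dual ℂ H,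
      genWeightSpace V ⇑χ₁ ≠ ⊥ → genWeightSpace V ⇑χ₂ ≠ ⊥ →
      ∃ w ∈ weylGroup g H, w χ₁ = χ₂)
    (Δ : Set (Weight ℂ H g)) (hΔ : ∀ γ ∈ Δ, γ.IsNonZero)
    (α β : Weight ℂ H g) (hαΔ : α ∈ Δ) (hβΔ : β ∈ Δ)
    (hα : α.IsNonZero) (hβ : β.IsNonZero)
    (hcartan : β (IsKilling.coroot α) = -1)
    (eα fα eβ fβ : g)
    (heα : eα ∈ rootSpace H ⇑α) (hfα : fα ∈ rootSpace H (-⇑α))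
    (heβ : eβ ∈ rootSpace H ⇑β) (hfβ : fβ ∈ rootSpace H (-⇑β))
    (hefα : ⁅eα, fα⁆ = (IsKilling.coroot α : g))
    (hefβ : ⁅eβ, fβ⁆ = (IsKilling.coroot β : g)) :
    ∀ v : V, ⁅eα, ⁅eβ, ⁅eα, v⁆⁆⁆ = 0 ∧ ⁅fα, ⁅fβ, ⁅fα, v⁆⁆⁆ = 0 := by
  classical
  set P := IsKilling.rootSystem H with hP
  set Q := P.RootForm with hQdef
  have hsym : ∀ x y, Q x y = Q y x := fun x y => by
    simpa using P.rootForm_symmetric.eq x y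
  have hsame : ∀ χ₁ χ₂ : Module.Dual ℂ H,
      genWeightSpace V ⇑χ₁ ≠ ⊥ → genWeightSpace V ⇑χ₂ ≠ ⊥ → Q χ₂ χ₂ = Q χ₁ χ₁ := by
    intro χ₁ χ₂ h1 h2
    obtain ⟨w, hwW, hwe⟩ := hminuscule χ₁ χ₂ h1 h2
    rw [← hwe]
    exact weylGroup_rootForm_invariant g H hwW χ₁
  have hαr : α ∈ H.root := by simpa [LieSubalgebra.root] using hα
  have hβr : β ∈ H.root := by simpa [LieSubalgebra.root] using hβ
  set iα : H.root := ⟨α, hαr⟩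
  set iβ : H.root := ⟨β, hβr⟩
  set A : Module.Dual ℂ H := Weight.toLinear ℂ H g α with hA
  set B : Module.Dual ℂ H := Weight.toLinear ℂ H g β with hB
  have hrootA : P.root iα = A := rfl
  have hrootB : P.root iβ = B := rfl
  have hpairing : P.pairing iβ iα = -1 := by
    rw [IsKilling.rootSystem_pairing_apply]
    exact hcartan
  have hpair : 2 * Q A B = -(Q A A) := by
    have := pairingQ_aux P iα iβ
    rw [hpairing] at this
    rw [hrootA, hrootB] at this
    linear_combination -this
  have hAne : Q A A ≠ 0 := by
    have := rootForm_self_ne_zero_aux P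
      (inferInstanceAs (IsKilling.rootSystem H).IsCrystallographic) iα
    rwa [hrootA] at this
  have nb : ∀ (f : H → ℂ) (w : V), w ∈ genWeightSpace V f → w ≠ 0 →
      genWeightSpace V f ≠ ⊥ := by
    intro f w hw hwne hbot
    rw [hbot] at hw
    exact hwne (by simpa using hw)
  -- main statement on each weight space
  have main : ∀ (χ : Weight ℂ H V) (v : V), v ∈ genWeightSpace V χ →
      (⁅eα, ⁅eβ, ⁅eα, v⁆⁆⁆ = 0 ∧ ⁅fα, ⁅fβ, ⁅fα, v⁆⁆⁆ = 0) := by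
    intro χ v hv
    set X : Module.Dual ℂ H := Weight.toLinear ℂ H V χ with hX
    have hc0 : (⇑χ : H → ℂ) = ⇑X := by ext x; simp [hX]
    constructor
    · by_contra hne
      have h1 : ⁅eα, v⁆ ∈ genWeightSpace V (⇑α + ⇑χ) :=
        lie_mem_genWeightSpace_of_mem_genWeightSpace heα hv
      have h2 : ⁅eβ, ⁅eα, v⁆⁆ ∈ genWeightSpace V (⇑β + (⇑α + ⇑χ)) :=
        lie_mem_genWeightSpace_of_mem_genWeightSpace heβ h1
      have h3 : ⁅eα, ⁅eβ, ⁅eα, v⁆⁆⁆ ∈ genWeightSpace V (⇑α + (⇑β + (⇑α + ⇑χ))) :=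
        lie_mem_genWeightSpace_of_mem_genWeightSpace heα h2
      have hv2 : ⁅eβ, ⁅eα, v⁆⁆ ≠ 0 := fun h => hne (by rw [h]; simp)
      have hv1 : ⁅eα, v⁆ ≠ 0 := fun h => hv2 (by rw [h]; simp)
      have hv0 : v ≠ 0 := fun h => hv1 (by rw [h]; simp)
      have hc1 : (⇑α + ⇑χ : H → ℂ) = ⇑(X + A) := by ext x; simp [hX, hA]; ring
      have hc2 : (⇑β + (⇑α + ⇑χ) : H → ℂ) = ⇑(X + A + B) := by
        ext x; simp [hX, hA, hB]; ring
      have hc3 : (⇑α + (⇑β + (⇑α + ⇑χ)) : H → ℂ) = ⇑(X + A + A + B) := by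
        ext x; simp [hX, hA, hB]; ring
      have n0 : genWeightSpace V ⇑X ≠ ⊥ := nb _ v (by rw [← hc0]; exact hv) hv0
      have n1 : genWeightSpace V ⇑(X + A) ≠ ⊥ := nb _ _ (by rw [← hc1]; exact h1) hv1
      have n2 : genWeightSpace V ⇑(X + A + B) ≠ ⊥ := nb _ _ (by rw [← hc2]; exact h2) hv2
      have n3 : genWeightSpace V ⇑(X + A + A + B) ≠ ⊥ := nb _ _ (by rw [← hc3]; exact h3) hne
      exact hAne (keyQ_aux Q hsym A B X (hsame X (X + A) n0 n1)
        (hsame X (X + A + B) n0 n2) (hsame X (X + A + A + B) n0 n3) hpair)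
    · by_contra hne
      have h1 : ⁅fα, v⁆ ∈ genWeightSpace V (-⇑α + ⇑χ) :=
        lie_mem_genWeightSpace_of_mem_genWeightSpace hfα hv
      have h2 : ⁅fβ, ⁅fα, v⁆⁆ ∈ genWeightSpace V (-⇑β + (-⇑α + ⇑χ)) :=
        lie_mem_genWeightSpace_of_mem_genWeightSpace hfβ h1
      have h3 : ⁅fα, ⁅fβ, ⁅fα, v⁆⁆⁆ ∈ genWeightSpace V (-⇑α + (-⇑β + (-⇑α + ⇑χ))) :=
        lie_mem_genWeightSpace_of_mem_genWeightSpace hfα h2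
      have hv2 : ⁅fβ, ⁅fα, v⁆⁆ ≠ 0 := fun h => hne (by rw [h]; simp)
      have hv1 : ⁅fα, v⁆ ≠ 0 := fun h => hv2 (by rw [h]; simp)
      have hv0 : v ≠ 0 := fun h => hv1 (by rw [h]; simp)
      have hc1 : (-⇑α + ⇑χ : H → ℂ) = ⇑(X + -A) := by ext x; simp [hX, hA]; ring
      have hc2 : (-⇑β + (-⇑α + ⇑χ) : H → ℂ) = ⇑(X + -A + -B) := by
        ext x; simp [hX, hA, hB]; ring
      have hc3 : (-⇑α + (-⇑β + (-⇑α + ⇑χ)) : H → ℂ) = ⇑(X + -A + -A + -B) := by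
        ext x; simp [hX, hA, hB]; ring
      have n0 : genWeightSpace V ⇑X ≠ ⊥ := nb _ v (by rw [← hc0]; exact hv) hv0
      have n1 : genWeightSpace V ⇑(X + -A) ≠ ⊥ := nb _ _ (by rw [← hc1]; exact h1) hv1
      have n2 : genWeightSpace V ⇑(X + -A + -B) ≠ ⊥ := nb _ _ (by rw [← hc2]; exact h2) hv2
      have n3 : genWeightSpace V ⇑(X + -A + -A + -B) ≠ ⊥ :=
        nb _ _ (by rw [← hc3]; exact h3) hne
      have hpair' : 2 * Q (-A) (-B) = -(Q (-A) (-A)) := by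
        simp only [map_neg, LinearMap.neg_apply, neg_neg]
        exact hpair
      have := keyQ_aux Q hsym (-A) (-B) X (hsame X (X + -A) n0 n1)
        (hsame X (X + -A + -B) n0 n2) (hsame X (X + -A + -A + -B) n0 n3) hpair'
      simp only [map_neg, LinearMap.neg_apply, neg_neg] at this
      exact hAne this
  -- reduce to weight spaces
  intro v
  have hv : v ∈ (⨆ χ : Weight ℂ H V, genWeightSpace V χ : LieSubmodule ℂ H V) := by
    rw [iSup_genWeightSpace_eq_top']; trivial
  rw [← LieSubmodule.mem_toSubmodule, LieSubmodule.iSup_toSubmodule] at hv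
  refine Submodule.iSup_induction (motive := fun v => ⁅eα, ⁅eβ, ⁅eα, v⁆⁆⁆ = 0 ∧ ⁅fα, ⁅fβ, ⁅fα, v⁆⁆⁆ = 0)
    _ hv (fun χ w hw => main χ w hw) (by simp) ?_
  intro x y hx hy
  constructor
  · have : ⁅eα, ⁅eβ, ⁅eα, x + y⁆⁆⁆ = ⁅eα, ⁅eβ, ⁅eα, x⁆⁆⁆ + ⁅eα, ⁅eβ, ⁅eα, y⁆⁆⁆ := by
      simp [lie_add]
    rw [this, hx.1, hy.1, add_zero]
  · have : ⁅fα, ⁅fβ, ⁅fα, x + y⁆⁆⁆ = ⁅fα, ⁅fβ, ⁅fα, x⁆⁆⁆ + ⁅fα, ⁅fβ, ⁅fα, y⁆⁆⁆ := by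
      simp [lie_add]
    rw [this, hx.2, hy.2, add_zero]
end

section
/- Let V be a minuscule representation of a simple complex Lie algebra g, and let i ≠ j be indices of simple roots with Cartan integer a_{ij} < 0. Then for every v ∈ V, e_i f_j · v = 0 and f_j e_i · v = 0. -/
open LieAlgebra LieModule

set_option linter.unusedSectionVars false

namespace MVAux
open LieAlgebra.IsKilling Module
variable {g : Type*} [LieRing g] [LieAlgebra ℂ g]
    [LieAlgebra.IsKilling ℂ g] [FiniteDimensional ℂ g]
    {H : LieSubalgebra ℂ g} [H.IsCartanSubalgebra]

noncomputable def B (χ ψ : Module.Dual ℂ H) : ℂ := χ ((cartanEquivDual H).symm ψ)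

lemma B_symm (χ ψ : Module.Dual ℂ H) : B (g := g) χ ψ = B ψ χ := by
  obtain ⟨x, rfl⟩ := (cartanEquivDual (L := g) H).surjective χ
  obtain ⟨y, rfl⟩ := (cartanEquivDual (L := g) H).surjective ψ
  simp only [B, LinearEquiv.symm_apply_apply, cartanEquivDual_apply_apply]
  exact LieModule.traceForm_comm ℂ H g x y

lemma B_coroot_apply (α : Weight ℂ H g) (χ : Module.Dual ℂ H) :
    χ (coroot α) =
      2 * (B (g := g) (Weight.toLinear ℂ H g α) (Weight.toLinear ℂ H g α))⁻¹ *
        B χ (Weight.toLinear ℂ H g α) := by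
  simp only [B, coroot, map_nsmul, map_smul, smul_eq_mul, nsmul_eq_mul, Weight.toLinear_apply]
  push_cast
  ring

lemma B_self_ne_zero {α : Weight ℂ H g} (hα : α.IsNonZero) :
    B (g := g) (Weight.toLinear ℂ H g α) (Weight.toLinear ℂ H g α) ≠ 0 := by
  have := root_apply_cartanEquivDual_symm_ne_zero (L := g) hα
  simpa [B] using this

set_option synthInstance.maxHeartbeats 1000000 in
lemma B_reflection (α : Weight ℂ H g) (hα : α.IsNonZero) (χ : Module.Dual ℂ H) :
    B (g := g) (χ - χ (coroot α) • Weight.toLinear ℂ H g α)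
      (χ - χ (coroot α) • Weight.toLinear ℂ H g α) = B χ χ := by
  set a := Weight.toLinear ℂ H g α with ha
  have h0 : B (g := g) a a ≠ 0 := B_self_ne_zero hα
  have hsymm : B (g := g) a χ = B χ a := B_symm a χ
  have hc : χ (coroot α) = 2 * (B (g := g) a a)⁻¹ * B χ a := B_coroot_apply α χ
  have hc' : χ (coroot α) * B (g := g) a a = 2 * B χ a := by
    rw [hc]; field_simp
  simp only [B, map_sub, map_smul, LinearMap.sub_apply, LinearMap.smul_apply,
    smul_eq_mul] at hsymm hc' ⊢
  set c := χ (coroot α)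
  linear_combination c * hc' - c * hsymm

lemma B_weyl {w : (Module.Dual ℂ H) ≃ₗ[ℂ] (Module.Dual ℂ H)} (hw : w ∈ weylGroup g H)
    (χ : Module.Dual ℂ H) : B (g := g) (w χ) (w χ) = B χ χ := by
  induction hw using Subgroup.closure_induction generalizing χ with
  | mem x hx =>
    obtain ⟨α, hα, rfl⟩ := hx
    rw [Module.reflection_apply]
    simpa using B_reflection α hα χ
  | one => simp
  | mul x y hx hy ihx ihy =>
    have : (x * y) χ = x (y χ) := rfl
    rw [this, ihx, ihy]
  | inv x hx ih =>
    have h := ih (x⁻¹ χ)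
    have : x (x⁻¹ χ) = χ := x.apply_symm_apply χ
    rw [this] at h
    exact h.symm


section ModuleSide

variable (V : Type*) [AddCommGroup V] [Module ℂ V] [LieRingModule g V] [LieModule ℂ g V] [FiniteDimensional ℂ V]

/-- If `χ` and `χ + α` are both weights of a minuscule module, then `χ (coroot α) = -1`. -/
lemma pairing_eq_neg_one
    (hmin : ∀ χ₁ χ₂ : Module.Dual ℂ H, genWeightSpace V ⇑χ₁ ≠ ⊥ → genWeightSpace V ⇑χ₂ ≠ ⊥ →
      ∃ w ∈ weylGroup g H, w χ₁ = χ₂)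
    (α : Weight ℂ H g) (hα : α.IsNonZero) (χ : Module.Dual ℂ H)
    (hχ : genWeightSpace V ⇑χ ≠ ⊥)
    (hχα : genWeightSpace V ⇑(χ + Weight.toLinear ℂ H g α) ≠ ⊥) :
    χ (coroot α) = -1 := by
  set a := Weight.toLinear ℂ H g α with ha
  obtain ⟨w, hw, hwχ⟩ := hmin χ (χ + a) hχ hχα
  have hQ : B (g := g) (χ + a) (χ + a) = B χ χ := by rw [← hwχ]; exact B_weyl hw χ
  have h0 : B (g := g) a a ≠ 0 := B_self_ne_zero hα
  have hsymm : B (g := g) a χ = B χ a := B_symm a χ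
  have hc : χ (coroot α) = 2 * (B (g := g) a a)⁻¹ * B χ a := B_coroot_apply α χ
  rw [hc]
  simp only [B, map_add, LinearMap.add_apply] at hQ hsymm h0 ⊢
  field_simp
  linear_combination hQ - hsymm

/-- Trichotomy: for a weight `χ` of `V` and a nonzero root `α`, either `χ + α` or `χ - α` is a
weight of `V`, or `χ (coroot α) = 0`. -/
lemma trichotomy (α : Weight ℂ H g) (hα : α.IsNonZero) (χ : H → ℂ)
    (hχ : genWeightSpace V χ ≠ ⊥) :
    genWeightSpace V (⇑α + χ) ≠ ⊥ ∨ genWeightSpace V (-⇑α + χ) ≠ ⊥ ∨ χ (coroot α) = 0 := by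
  set χw : Weight ℂ H V := ⟨χ, hχ⟩ with hχw
  have hα0 : (⇑α : H → ℂ) ≠ 0 := hα
  by_cases h1 : 1 ≤ chainTopCoeff ⇑α χw
  · left
    have := genWeightSpace_nsmul_add_ne_bot_of_le ⇑α χw h1
    simp at this; exact this
  by_cases h2 : 1 ≤ chainBotCoeff ⇑α χw
  · right; left
    have := genWeightSpace_neg_zsmul_add_ne_bot ⇑α χw (n := 1) h2
    simp [neg_smul] at this; exact this
  right; right
  replace h1 : chainTopCoeff ⇑α χw = 0 := by omega
  replace h2 : chainBotCoeff ⇑α χw = 0 := by omega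
  have hp : genWeightSpace V ((-1 : ℤ) • ⇑α + χ) = ⊥ := by
    have := genWeightSpace_chainBotCoeff_sub_one_zsmul_sub ⇑α χw hα0
    rw [h2] at this
    simp at this ⊢; exact this
  have hq : genWeightSpace V ((1 : ℤ) • ⇑α + χ) = ⊥ := by
    have := genWeightSpace_chainTopCoeff_add_one_zsmul_add ⇑α χw hα0
    rw [h1] at this
    simp at this ⊢; exact this
  have hx : coroot α ∈ corootSpace (⇑α : H → ℂ) := by
    have hmem := cartanEquivDual_symm_apply_mem_corootSpace (L := g) α
    rw [coroot, two_smul]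
    exact add_mem (SMulMemClass.smul_mem _ hmem) (SMulMemClass.smul_mem _ hmem)
  have htr := trace_toEnd_genWeightSpaceChain_eq_zero V ⇑α χ (-1) 1 hp hq hx
  have hchain : genWeightSpaceChain V ⇑α χ (-1) 1 = genWeightSpace V χ := by
    rw [genWeightSpaceChain_def']
    have hIoo : Finset.Ioo (-1 : ℤ) 1 = {0} := by decide
    rw [hIoo]
    have h00 : ((0 : ℤ) • ⇑α + χ : ↥H → ℂ) = χ := by simp
    simp only [Finset.mem_singleton, iSup_iSup_eq_left, h00]
  rw [hchain] at htr
  rw [trace_toEnd_genWeightSpace] at htr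
  have hfin : Module.finrank ℂ (genWeightSpace V χ) ≠ 0 := by
    have : Nontrivial (genWeightSpace V χ) := by
      rwa [LieSubmodule.nontrivial_iff_ne_bot]
    exact Module.finrank_pos.ne'
  simpa [hfin, smul_eq_mul] using htr

end ModuleSide
end MVAux


/-- **Mixed vanishing on minuscule representations.**
Let `V` be a minuscule irreducible representation of a simple complex Lie
algebra `g`, and let `α ≠ β` be simple roots with Cartan integer
`a_{αβ} = ⟨β, α∨⟩ < 0`.  With `eα` a root vector for `α` and `fβ` one for `-β`
(parts of Chevalley generator triples), one has `eα fβ ⬝ v = 0` and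
`fβ eα ⬝ v = 0` for every `v ∈ V`. -/
theorem mixed_vanishing_on_minuscule
    (g : Type*) [LieRing g] [LieAlgebra ℂ g] [LieAlgebra.IsSimple ℂ g]
    [LieAlgebra.IsKilling ℂ g] [FiniteDimensional ℂ g]
    (H : LieSubalgebra ℂ g) [H.IsCartanSubalgebra]
    (V : Type*) [AddCommGroup V] [Module ℂ V] [LieRingModule g V] [LieModule ℂ g V]
    [FiniteDimensional ℂ V] [LieModule.IsIrreducible ℂ g V]
    (hminuscule : ∀ χ₁ χ₂ : Module.Dual ℂ H,
      genWeightSpace V ⇑χ₁ ≠ ⊥ → genWeightSpace V ⇑χ₂ ≠ ⊥ →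
      ∃ w ∈ weylGroup g H, w χ₁ = χ₂)
    (Δ : Set (Weight ℂ H g)) (hΔ : ∀ γ ∈ Δ, γ.IsNonZero)
    (α β : Weight ℂ H g) (hαΔ : α ∈ Δ) (hβΔ : β ∈ Δ)
    (hα : α.IsNonZero) (hβ : β.IsNonZero) (hne : α ≠ β)
    (hcartan : ∃ m : ℤ, m < 0 ∧ β (IsKilling.coroot α) = (m : ℂ))
    (eα fα eβ fβ : g)
    (heα : eα ∈ rootSpace H ⇑α) (hfα : fα ∈ rootSpace H (-⇑α))
    (heβ : eβ ∈ rootSpace H ⇑β) (hfβ : fβ ∈ rootSpace H (-⇑β))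
    (hefα : ⁅eα, fα⁆ = (IsKilling.coroot α : g))
    (hefβ : ⁅eβ, fβ⁆ = (IsKilling.coroot β : g)) :
    ∀ v : V, ⁅eα, ⁅fβ, v⁆⁆ = 0 ∧ ⁅fβ, ⁅eα, v⁆⁆ = 0 := by
  classical
  obtain ⟨m, hm, hmβ⟩ := hcartan
  have hsup : (⊤ : Submodule ℂ V) = ⨆ χ : ↥H → ℂ, (genWeightSpace V χ : Submodule ℂ V) := by
    rw [← LieSubmodule.iSup_toSubmodule, iSup_genWeightSpace_eq_top ℂ H V]
    rfl
  have key : ∀ x y : g, (∀ χ : ↥H → ℂ, genWeightSpace V χ ≠ ⊥ → ∀ v ∈ genWeightSpace V χ,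
      ⁅x, ⁅y, v⁆⁆ = 0) → ∀ v : V, ⁅x, ⁅y, v⁆⁆ = 0 := by
    intro x y h v
    have hker : (⊤ : Submodule ℂ V) ≤
        LinearMap.ker ((toEnd ℂ g V x) ∘ₗ (toEnd ℂ g V y)) := by
      rw [hsup]
      refine iSup_le fun χ => ?_
      by_cases hχ : genWeightSpace V χ = ⊥
      · rw [hχ, LieSubmodule.bot_toSubmodule]
        exact bot_le
      · intro v hv
        simp only [LinearMap.mem_ker, LinearMap.comp_apply, toEnd_apply_apply]
        exact h χ hχ v hv
    have := hker (Submodule.mem_top (x := v))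
    simpa only [LinearMap.mem_ker, LinearMap.comp_apply, toEnd_apply_apply] using this
  have hαc : α (IsKilling.coroot α) = 2 := IsKilling.root_apply_coroot hα
  intro v
  constructor
  · -- eα fβ v = 0
    refine key eα fβ ?_ v
    intro χ hχ v hv
    by_contra ht
    have hu : ⁅fβ, v⁆ ∈ genWeightSpace V (-⇑β + χ) :=
      lie_mem_genWeightSpace_of_mem_genWeightSpace hfβ hv
    have ht2 : ⁅eα, ⁅fβ, v⁆⁆ ∈ genWeightSpace V (⇑α + (-⇑β + χ)) :=
      lie_mem_genWeightSpace_of_mem_genWeightSpace heα hu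
    have hψ : genWeightSpace V (-⇑β + χ) ≠ ⊥ := by
      intro hb
      rw [hb] at hu
      apply ht
      rw [(LieSubmodule.mem_bot _).mp hu]
      simp
    have hφ : genWeightSpace V (⇑α + (-⇑β + χ)) ≠ ⊥ := by
      intro hb
      rw [hb] at ht2
      exact ht ((LieSubmodule.mem_bot _).mp ht2)
    set χw : Weight ℂ H V := ⟨χ, hχ⟩ with hχw
    set χd := Weight.toLinear ℂ H V χw with hχdd
    set ad := Weight.toLinear ℂ H g α with hadd
    set bd := Weight.toLinear ℂ H g β with hbdd
    have hχd : ⇑χd = χ := by funext x; simp [hχdd, hχw]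
    have hcψ : ⇑(χd - bd) = (-⇑β + χ) := by
      funext x
      simp only [LinearMap.sub_apply, hχd, hadd, hbdd, Weight.toLinear_apply, Pi.add_apply, Pi.neg_apply, hχd]
      ring
    have hcφ : ⇑(χd - bd + ad) = (⇑α + (-⇑β + χ)) := by
      funext x
      simp only [LinearMap.add_apply, LinearMap.sub_apply, hχd, hadd, hbdd, Weight.toLinear_apply, Pi.add_apply,
        Pi.neg_apply, hχd]
      ring
    have e1 : (χd - bd) (IsKilling.coroot α) = -1 := by
      apply MVAux.pairing_eq_neg_one V hminuscule α hα (χd - bd)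
      · rw [hcψ]; exact hψ
      · rw [hcφ]; exact hφ
    have e2 : χ (IsKilling.coroot α) = (m : ℂ) - 1 := by
      have h' : χ (IsKilling.coroot α) - β (IsKilling.coroot α) = -1 := by
        simpa [hχd, hbdd, Weight.toLinear_apply] using e1
      rw [hmβ] at h'
      linear_combination h'
    rcases MVAux.trichotomy V α hα χ hχ with h | h | h
    · have e3 : χd (IsKilling.coroot α) = -1 := by
        apply MVAux.pairing_eq_neg_one V hminuscule α hα χd
        · rw [hχd]; exact hχ
        · have : ⇑(χd + ad) = (⇑α + χ) := by
            funext x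
            simp only [LinearMap.add_apply, hχd, hadd, hbdd, Weight.toLinear_apply, Pi.add_apply, hχd]
            ring
          rw [this]; exact h
      have e3' : χ (IsKilling.coroot α) = -1 := by rw [← hχd]; exact e3
      have : (m : ℂ) = 0 := by linear_combination e3' - e2
      have : m = 0 := by exact_mod_cast this
      omega
    · have e3 : (χd - ad) (IsKilling.coroot α) = -1 := by
        apply MVAux.pairing_eq_neg_one V hminuscule α hα (χd - ad)
        · have : ⇑(χd - ad) = (-⇑α + χ) := by
            funext x
            simp only [LinearMap.sub_apply, hχd, hadd, hbdd, Weight.toLinear_apply, Pi.add_apply, Pi.neg_apply, hχd]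
            ring
          rw [this]; exact h
        · have : ⇑(χd - ad + ad) = χ := by
            funext x
            simp only [LinearMap.add_apply, LinearMap.sub_apply, hχd, hadd, hbdd, Weight.toLinear_apply, hχd]
            ring
          rw [this]; exact hχ
      have e3' : χ (IsKilling.coroot α) - α (IsKilling.coroot α) = -1 := by
        simpa [hχd, hadd, hbdd, Weight.toLinear_apply] using e3
      rw [hαc, e2] at e3'
      have : (m : ℂ) = 2 := by linear_combination e3'
      have : m = 2 := by exact_mod_cast this
      omega
    · rw [e2] at h
      have : (m : ℂ) = 1 := by linear_combination h
      have : m = 1 := by exact_mod_cast this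
      omega
  · -- fβ eα v = 0
    refine key fβ eα ?_ v
    intro χ hχ v hv
    by_contra ht
    have hu : ⁅eα, v⁆ ∈ genWeightSpace V (⇑α + χ) :=
      lie_mem_genWeightSpace_of_mem_genWeightSpace heα hv
    have ht2 : ⁅fβ, ⁅eα, v⁆⁆ ∈ genWeightSpace V (-⇑β + (⇑α + χ)) :=
      lie_mem_genWeightSpace_of_mem_genWeightSpace hfβ hu
    have hψ : genWeightSpace V (⇑α + χ) ≠ ⊥ := by
      intro hb
      rw [hb] at hu
      apply ht
      rw [(LieSubmodule.mem_bot _).mp hu]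
      simp
    have hφ : genWeightSpace V (-⇑β + (⇑α + χ)) ≠ ⊥ := by
      intro hb
      rw [hb] at ht2
      exact ht ((LieSubmodule.mem_bot _).mp ht2)
    set χw : Weight ℂ H V := ⟨χ, hχ⟩ with hχw
    set χd := Weight.toLinear ℂ H V χw with hχdd
    set ad := Weight.toLinear ℂ H g α with hadd
    set bd := Weight.toLinear ℂ H g β with hbdd
    have hχd : ⇑χd = χ := by funext x; simp [hχdd, hχw]
    have e1 : χd (IsKilling.coroot α) = -1 := by
      apply MVAux.pairing_eq_neg_one V hminuscule α hα χd
      · rw [hχd]; exact hχ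
      · have : ⇑(χd + ad) = (⇑α + χ) := by
          funext x
          simp only [LinearMap.add_apply, hχd, hadd, hbdd, Weight.toLinear_apply, Pi.add_apply, hχd]
          ring
        rw [this]; exact hψ
    have e2 : χ (IsKilling.coroot α) = -1 := by rw [← hχd]; exact e1
    have hψval : (-⇑β + (⇑α + χ)) (IsKilling.coroot α) = 1 - (m : ℂ) := by
      simp only [Pi.add_apply, Pi.neg_apply]
      rw [hmβ, hαc, e2]
      ring
    rcases MVAux.trichotomy V α hα (-⇑β + (⇑α + χ)) hφ with h | h | h
    · have e3 : (χd + ad - bd) (IsKilling.coroot α) = -1 := by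
        apply MVAux.pairing_eq_neg_one V hminuscule α hα (χd + ad - bd)
        · have : ⇑(χd + ad - bd) = (-⇑β + (⇑α + χ)) := by
            funext x
            simp only [LinearMap.add_apply, LinearMap.sub_apply, hχd, hadd, hbdd, Weight.toLinear_apply,
              Pi.add_apply, Pi.neg_apply, hχd]
            ring
          rw [this]; exact hφ
        · have : ⇑(χd + ad - bd + ad) = (⇑α + (-⇑β + (⇑α + χ))) := by
            funext x
            simp only [LinearMap.add_apply, LinearMap.sub_apply, hχd, hadd, hbdd, Weight.toLinear_apply,
              Pi.add_apply, Pi.neg_apply, hχd]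
            ring
          rw [this]; exact h
      have e3' : χ (IsKilling.coroot α) + α (IsKilling.coroot α) - β (IsKilling.coroot α) = -1 := by
        simpa [hχd, hadd, hbdd, Weight.toLinear_apply] using e3
      rw [hαc, hmβ, e2] at e3'
      have : (m : ℂ) = 2 := by linear_combination -e3'
      have : m = 2 := by exact_mod_cast this
      omega
    · have e3 : (χd - bd) (IsKilling.coroot α) = -1 := by
        apply MVAux.pairing_eq_neg_one V hminuscule α hα (χd - bd)
        · have : ⇑(χd - bd) = (-⇑α + (-⇑β + (⇑α + χ))) := by
            funext x
            simp only [LinearMap.sub_apply, hχd, hadd, hbdd, Weight.toLinear_apply, Pi.add_apply, Pi.neg_apply, hχd]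
            ring
          rw [this]; exact h
        · have : ⇑(χd - bd + ad) = (-⇑β + (⇑α + χ)) := by
            funext x
            simp only [LinearMap.add_apply, LinearMap.sub_apply, hχd, hadd, hbdd, Weight.toLinear_apply,
              Pi.add_apply, Pi.neg_apply, hχd]
            ring
          rw [this]; exact hφ
      have e3' : χ (IsKilling.coroot α) - β (IsKilling.coroot α) = -1 := by
        simpa [hχd, hadd, hbdd, Weight.toLinear_apply] using e3
      rw [hmβ, e2] at e3'
      have : (m : ℂ) = 0 := by linear_combination -e3'
      have : m = 0 := by exact_mod_cast this
      omega
    · rw [hψval] at h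
      have : (m : ℂ) = 1 := by linear_combination -h
      have : m = 1 := by exact_mod_cast this
      omega
end

section
/- Let W be a Coxeter group and w ∈ W a fully commutative element (every reduced expression of w is obtained from any other by exchanging adjacent commuting generators). If w = w's_i with ℓ(w) = ℓ(w') + 1, then w' is also fully commutative. -/
/-- A single commutation move on words in a Coxeter system: swap two adjacent
letters whose simple reflections commute. -/
def CoxeterSystem.CommMove {B W : Type*} [Group W] {M : CoxeterMatrix B}
    (cs : CoxeterSystem M W) (l l' : List B) : Prop :=
  ∃ (u v : List B) (a b : B),
    cs.simple a * cs.simple b = cs.simple b * cs.simple a ∧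
    l = u ++ a :: b :: v ∧ l' = u ++ b :: a :: v

/-- An element `w` is fully commutative if any two reduced words for `w` are
related by a sequence of commutation moves. -/
def CoxeterSystem.FullyCommutative {B W : Type*} [Group W] {M : CoxeterMatrix B}
    (cs : CoxeterSystem M W) (w : W) : Prop :=
  ∀ l l' : List B,
    (cs.wordProd l = w ∧ cs.IsReduced l) →
    (cs.wordProd l' = w ∧ cs.IsReduced l') →
    Relation.ReflTransGen cs.CommMove l l'

namespace CoxeterSystem

variable {B W : Type*} [Group W] {M : CoxeterMatrix B} (cs : CoxeterSystem M W)

/-- A single commutation move interacts well with deleting the last occurrence of `i`. -/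
lemma commMove_delete_step (i : B) {x y : List B} (h : cs.CommMove x y)
    (p q : List B) (hx : x = p ++ i :: q) (hq : i ∉ q) :
    ∃ p' q', y = p' ++ i :: q' ∧ i ∉ q' ∧
      Relation.ReflTransGen cs.CommMove (p ++ q) (p' ++ q') := by
  obtain ⟨u, v, a, c, hcomm, hb, hy⟩ := h
  subst hy
  rw [hx] at hb
  rcases List.append_eq_append_iff.mp hb with ⟨t, hu, htq⟩ | ⟨t, hp, htq⟩
  · cases t with
    | nil =>
      -- marked letter is `a`
      simp only [List.append_nil] at hu
      obtain ⟨ha, hqe⟩ := List.cons_eq_cons.mp htq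
      refine ⟨p ++ [c], v, by rw [hu, ← ha]; simp, ?_, ?_⟩
      · rw [hqe] at hq; exact fun hv => hq (List.mem_cons_of_mem _ hv)
      · rw [hqe]; simpa using Relation.ReflTransGen.refl
    | cons hd t' =>
      -- marked letter is inside `u`
      obtain ⟨hhd, hqe⟩ := List.cons_eq_cons.mp htq
      refine ⟨p, t' ++ c :: a :: v, by rw [hu, ← hhd]; simp, ?_, ?_⟩
      · rw [hqe] at hq
        simp only [List.append_eq, List.mem_append, List.mem_cons] at hq ⊢
        tauto
      · exact Relation.ReflTransGen.single
          ⟨p ++ t', v, a, c, hcomm, by rw [hqe]; simp, by simp⟩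
  · cases t with
    | nil =>
      -- marked letter is `a`
      simp only [List.append_nil] at hp
      obtain ⟨ha, hqe⟩ := List.cons_eq_cons.mp htq
      refine ⟨p ++ [c], v, by rw [hp, ha]; simp, ?_, ?_⟩
      · rw [← hqe] at hq; exact fun hv => hq (List.mem_cons_of_mem _ hv)
      · rw [← hqe]; simpa using Relation.ReflTransGen.refl
    | cons hd t2 =>
      obtain ⟨ha, hq'⟩ := List.cons_eq_cons.mp htq
      cases t2 with
      | nil =>
        -- marked letter is `c`
        obtain ⟨hc, hqe⟩ := List.cons_eq_cons.mp hq'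
        by_cases hai : hd = i
        · refine ⟨u ++ [i], q, by simp [hc, ha, hai, hqe], hq, ?_⟩
          rw [hp, hai]
        · refine ⟨u, a :: q, by simp [hc, hqe], ?_, ?_⟩
          · simp only [List.mem_cons]
            rintro (h1 | h1)
            · exact hai (ha ▸ h1.symm)
            · exact hq h1
          · rw [hp, ← ha]
            simpa using Relation.ReflTransGen.refl
      | cons hd2 t3 =>
        -- marked letter is inside `v`
        obtain ⟨hc, hv⟩ := List.cons_eq_cons.mp hq'
        refine ⟨u ++ c :: a :: t3, q, by rw [hv]; simp, hq, ?_⟩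
        exact Relation.ReflTransGen.single
          ⟨u, t3 ++ q, a, c, hcomm, by rw [hp, ← ha, ← hc]; simp, by simp⟩

/-- A chain of commutation moves interacts well with deleting the last occurrence of `i`. -/
lemma commMove_delete_chain (i : B) {x y : List B}
    (h : Relation.ReflTransGen cs.CommMove x y)
    (p q : List B) (hx : x = p ++ i :: q) (hq : i ∉ q) :
    ∃ p' q', y = p' ++ i :: q' ∧ i ∉ q' ∧
      Relation.ReflTransGen cs.CommMove (p ++ q) (p' ++ q') := by
  induction h with
  | refl => exact ⟨p, q, hx, hq, Relation.ReflTransGen.refl⟩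
  | tail h1 h2 ih =>
    obtain ⟨p2, q2, hb, hq2, hrel⟩ := ih
    obtain ⟨p3, q3, hc, hq3, hrel'⟩ := cs.commMove_delete_step i h2 p2 q2 hb hq2
    exact ⟨p3, q3, hc, hq3, hrel.trans hrel'⟩

end CoxeterSystem

/-- **Full commutativity passes to right prefixes.**
If `w = w' sᵢ` with `ℓ(w) = ℓ(w') + 1` and `w` is fully commutative, then so
is `w'`. -/
theorem fullyCommutative_of_mul_simple_right
    {B W : Type*} [Group W] {M : CoxeterMatrix B} (cs : CoxeterSystem M W)
    (w w' : W) (i : B)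
    (hmul : w = w' * cs.simple i)
    (hlen : cs.length w = cs.length w' + 1)
    (hfc : cs.FullyCommutative w) :
    cs.FullyCommutative w' := by
  intro l l' ⟨hl, hlr⟩ ⟨hl', hlr'⟩
  have key : ∀ m : List B, cs.wordProd m = w' → cs.IsReduced m →
      cs.wordProd (m ++ [i]) = w ∧ cs.IsReduced (m ++ [i]) := by
    intro m hm hmr
    constructor
    · rw [cs.wordProd_append, cs.wordProd_singleton, hm, hmul]
    · unfold CoxeterSystem.IsReduced at hmr ⊢
      rw [cs.wordProd_append, cs.wordProd_singleton, hm, ← hmul, hlen]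
      rw [hm] at hmr
      simp [hmr]
  obtain ⟨h1, h2⟩ := key l hl hlr
  obtain ⟨h1', h2'⟩ := key l' hl' hlr'
  have hchain := hfc (l ++ [i]) (l' ++ [i]) ⟨h1, h2⟩ ⟨h1', h2'⟩
  obtain ⟨p', q', hy, hq', hrel⟩ :=
    cs.commMove_delete_chain i hchain l [] (by simp) (by simp)
  rcases q'.eq_nil_or_concat with rfl | ⟨q'', c, rfl⟩
  · have : l' = p' := by
      have := List.append_inj' hy rfl
      exact this.1
    subst this
    simpa using hrel
  · exfalso
    have : l' ++ [i] = (p' ++ i :: q'') ++ [c] := by simpa using hy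
    have hic : i = c := by
      have := List.append_inj' this rfl
      simpa using this.2
    exact hq' (by simp [hic])
end

section
/- Fix a reduced word w^P = s_{r_1}⋯s_{r_ℓ} in a Coxeter group W and a subexpression (i_1 < ⋯ < i_{ℓ'}) for an element w' (so s_{r_{i_1}}⋯s_{r_{i_{ℓ'}}} = w' with ℓ(w') = ℓ'). Suppose ĩ < i_j satisfies r_ĩ = r_{i_j}, there exists j' < j with i_{j'} < ĩ < i_{j'+1} ≤ i_j, and s_{r_{i_j}} commutes with s_{r_{i_m}} for all m ∈ {j'+1,…,j−1}. Then the increasing sequence (i_1,…,i_{j'}, ĩ, i_{j'+1},…,i_{j−1}, i_{j+1},…,i_{ℓ'}) is again a subexpression for w'. -/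
private theorem range'_split (s k m n : ℕ) (h : k = m + n) (s' : ℕ) (hs : s' = s + m) :
    List.range' s k = List.range' s m ++ List.range' s' n := by
  subst h hs
  have := List.range'_append (s := s) (m := m) (n := n) (step := 1)
  simp only [Nat.one_mul] at this
  exact this.symm

private theorem comm_wordProd {B W : Type*} [Group W] {M : CoxeterMatrix B}
    (cs : CoxeterSystem M W) (s : W) (l : List B)
    (h : ∀ x ∈ l, s * cs.simple x = cs.simple x * s) :
    s * cs.wordProd l = cs.wordProd l * s := by
  induction l with
  | nil => simp
  | cons a t ih =>
    rw [cs.wordProd_cons, ← mul_assoc, h a (List.mem_cons_self), mul_assoc,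
      ih (fun x hx => h x (List.mem_cons_of_mem a hx)), ← mul_assoc]

/-- **Moving a letter of a subexpression across commuting letters (operation (ii)).**
Fix a reduced word `s_{r 0} ⋯ s_{r (L-1)}` for `w^P` and a subexpression
`i : Fin L' → Fin L` (increasing, letters multiplying to `w'`, `ℓ(w') = L'`).
Suppose a position `itil < i j` carries the same letter as position `i j`, there
is `j' < j` with `i j' < itil < i (j'+1)`, and the letter at `i j` commutes with
the letters at the intermediate positions `i m`, `j' < m < j`.  Then the
increasing sequence `(i 0, …, i j', itil, i (j'+1), …, i (j-1), i (j+1), …)`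
is again a subexpression for `w'`. -/
theorem subexpression_move_letter_across_commuting
    {B W : Type*} [Group W] {M : CoxeterMatrix B}
    (cs : CoxeterSystem M W)
    {L L' : ℕ} (r : Fin L → B)
    (hred : cs.IsReduced (List.ofFn fun m => r m))
    (w' : W) (hlen : cs.length w' = L')
    (i : Fin L' → Fin L) (hmono : StrictMono i)
    (hprod : cs.wordProd (List.ofFn fun m => r (i m)) = w')
    (j j' : Fin L') (hj'j : j' < j)
    (itil : Fin L) (hletter : r itil = r (i j)) (hitil_lt : itil < i j)
    (hlow : i j' < itil)
    (hhigh : ∀ m : Fin L', j' < m → itil < i m)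
    (hcomm : ∀ m : Fin L', j' < m → m < j →
      cs.simple (r (i j)) * cs.simple (r (i m))
        = cs.simple (r (i m)) * cs.simple (r (i j))) :
    let σ : Fin L' → Fin L := fun m =>
      if m.1 ≤ j'.1 then i m
      else if m.1 = j'.1 + 1 then itil
      else if m.1 ≤ j.1 then i ⟨m.1 - 1, lt_of_le_of_lt (Nat.sub_le m.1 1) m.2⟩
      else i m
    StrictMono σ ∧ cs.wordProd (List.ofFn fun m => r (σ m)) = w' := by
  intro σ
  have hσ : σ = fun m : Fin L' =>
      if m.1 ≤ j'.1 then i m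
      else if m.1 = j'.1 + 1 then itil
      else if m.1 ≤ j.1 then i ⟨m.1 - 1, lt_of_le_of_lt (Nat.sub_le m.1 1) m.2⟩
      else i m := rfl
  set a := j'.1 with ha
  set b := j.1 with hb
  have hab : a < b := hj'j
  have hbn : b < L' := j.2
  -- value of σ in each region
  have hσ1 : ∀ m : Fin L', m.1 ≤ a → σ m = i m := by
    intro m hm; simp only [hσ]; rw [if_pos hm]
  have hσ2 : ∀ m : Fin L', m.1 = a + 1 → σ m = itil := by
    intro m hm; simp only [hσ]; rw [if_neg (by omega), if_pos hm]
  have hσ3 : ∀ m : Fin L', a + 1 < m.1 → m.1 ≤ b →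
      σ m = i ⟨m.1 - 1, lt_of_le_of_lt (Nat.sub_le m.1 1) m.2⟩ := by
    intro m h1 h2; simp only [hσ]
    rw [if_neg (by omega), if_neg (by omega), if_pos h2]
  have hσ4 : ∀ m : Fin L', b < m.1 → σ m = i m := by
    intro m h1; simp only [hσ]
    rw [if_neg (by omega), if_neg (by omega), if_neg (by omega)]
  constructor
  · -- strict monotonicity
    intro m1 m2 hlt
    have hlt' : m1.1 < m2.1 := hlt
    rcases le_or_gt m1.1 a with h1 | h1
    · rw [hσ1 m1 h1]
      rcases le_or_gt m2.1 a with h2 | h2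
      · rw [hσ1 m2 h2]; exact hmono hlt
      rcases Nat.eq_or_lt_of_le (Nat.succ_le_of_lt h2) with h2' | h2'
      · rw [hσ2 m2 h2'.symm]
        calc i m1 ≤ i j' := by
              rcases eq_or_lt_of_le (show m1 ≤ j' from h1) with h | h
              · rw [h]
              · exact le_of_lt (hmono h)
          _ < itil := hlow
      rcases le_or_gt m2.1 b with h3 | h3
      · rw [hσ3 m2 (by omega) h3]
        exact hmono (Fin.lt_def.mpr (by simp; omega))
      · rw [hσ4 m2 h3]; exact hmono hlt
    rcases Nat.eq_or_lt_of_le (Nat.succ_le_of_lt h1) with h1' | h1'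
    · rw [hσ2 m1 h1'.symm]
      rcases le_or_gt m2.1 b with h3 | h3
      · rw [hσ3 m2 (by omega) h3]
        exact hhigh _ (Fin.lt_def.mpr (by simp; omega))
      · rw [hσ4 m2 h3]
        exact hhigh _ (Fin.lt_def.mpr (by simp; omega))
    rcases le_or_gt m1.1 b with h2 | h2
    · rw [hσ3 m1 h1' h2]
      rcases le_or_gt m2.1 b with h3 | h3
      · rw [hσ3 m2 (by omega) h3]
        exact hmono (Fin.lt_def.mpr (by simp; omega))
      · rw [hσ4 m2 h3]
        exact hmono (Fin.lt_def.mpr (by simp; omega))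
    · rw [hσ4 m1 h2, hσ4 m2 (by omega)]
      exact hmono hlt
  · -- the word product
    classical
    -- ℕ-indexed letter functions
    set ρ : ℕ → B := fun k => if h : k < L' then r (i ⟨k, h⟩) else r (i j) with hρdef
    set τ : ℕ → B := fun k => if h : k < L' then r (σ ⟨k, h⟩) else r (i j) with hτdef
    have hρval : ∀ (k : ℕ) (h : k < L'), ρ k = r (i ⟨k, h⟩) := fun k h => dif_pos h
    have hτval : ∀ (k : ℕ) (h : k < L'), τ k = r (σ ⟨k, h⟩) := fun k h => dif_pos h
    have hofρ : (List.ofFn fun m : Fin L' => r (i m)) = (List.range L').map ρ := by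
      apply List.ext_getElem
      · simp
      · intro k h1 h2
        simp only [List.getElem_ofFn, List.getElem_map, List.getElem_range]
        simp only [List.length_ofFn] at h1
        rw [hρval k h1]
    have hofτ : (List.ofFn fun m : Fin L' => r (σ m)) = (List.range L').map τ := by
      apply List.ext_getElem
      · simp
      · intro k h1 h2
        simp only [List.getElem_ofFn, List.getElem_map, List.getElem_range]
        simp only [List.length_ofFn] at h1
        rw [hτval k h1]
    rw [hofτ, ← hprod, hofρ]
    -- split the ranges
    have hsplitτ : List.range L' =
        List.range' 0 (a + 1) ++ List.range' (a + 1) 1 ++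
          List.range' (a + 2) (b - (a + 1)) ++ List.range' (b + 1) (L' - (b + 1)) := by
      rw [List.range_eq_range',
        range'_split 0 L' (a + 1) (L' - (a + 1)) (by omega) (a + 1) (by omega),
        range'_split (a + 1) (L' - (a + 1)) 1 (L' - (a + 2)) (by omega) (a + 2) (by omega),
        range'_split (a + 2) (L' - (a + 2)) (b - (a + 1)) (L' - (b + 1)) (by omega)
          (b + 1) (by omega)]
      simp [List.append_assoc]
    have hsplitρ : List.range L' =
        List.range' 0 (a + 1) ++ List.range' (a + 1) (b - (a + 1)) ++
          List.range' b 1 ++ List.range' (b + 1) (L' - (b + 1)) := by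
      rw [List.range_eq_range',
        range'_split 0 L' (a + 1) (L' - (a + 1)) (by omega) (a + 1) (by omega),
        range'_split (a + 1) (L' - (a + 1)) (b - (a + 1)) (L' - b) (by omega) b (by omega),
        range'_split b (L' - b) 1 (L' - (b + 1)) (by omega) (b + 1) (by omega)]
      simp [List.append_assoc]
    -- segment identifications
    have hseg1 : (List.range' 0 (a + 1)).map τ = (List.range' 0 (a + 1)).map ρ := by
      apply List.map_congr_left
      intro x hx
      rw [List.mem_range'_1] at hx
      have hxL : x < L' := by omega
      rw [hτval x hxL, hρval x hxL, hσ1 ⟨x, hxL⟩ (by simpa using by omega)]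
    have hseg4 : (List.range' (b + 1) (L' - (b + 1))).map τ
        = (List.range' (b + 1) (L' - (b + 1))).map ρ := by
      apply List.map_congr_left
      intro x hx
      rw [List.mem_range'_1] at hx
      have hxL : x < L' := by omega
      rw [hτval x hxL, hρval x hxL, hσ4 ⟨x, hxL⟩ (by simpa using by omega)]
    have hseg2 : (List.range' (a + 2) (b - (a + 1))).map τ
        = (List.range' (a + 1) (b - (a + 1))).map ρ := by
      have hmap := List.map_add_range' (a := 1) (a + 1) (b - (a + 1)) 1
      rw [show 1 + (a + 1) = a + 2 by omega] at hmap
      rw [← hmap, List.map_map]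
      apply List.map_congr_left
      intro x hx
      rw [List.mem_range'_1] at hx
      have hxL : x < L' := by omega
      have hxL' : 1 + x < L' := by omega
      simp only [Function.comp_apply]
      rw [hτval (1 + x) hxL', hρval x hxL,
        hσ3 ⟨1 + x, hxL'⟩ (by simp; omega) (by simp; omega)]
      congr 1
      apply congrArg
      apply Fin.ext
      simp
    -- the two singletons
    have hsing : τ (a + 1) = r itil := by
      have hL : a + 1 < L' := by omega
      rw [hτval (a + 1) hL, hσ2 ⟨a + 1, hL⟩ rfl]
    have hsingρ : ρ b = r (i j) := by
      rw [hρval b hbn]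
    -- products
    conv_lhs => rw [hsplitτ]
    conv_rhs => rw [hsplitρ]
    simp only [List.map_append, cs.wordProd_append, List.range'_one, List.map_singleton,
      cs.wordProd_singleton, hseg1, hseg2, hseg4, hsing, hsingρ, hletter]
    -- now commute the simple reflection across the middle block
    have hcommL : cs.simple (r (i j)) * cs.wordProd ((List.range' (a + 1) (b - (a + 1))).map ρ)
        = cs.wordProd ((List.range' (a + 1) (b - (a + 1))).map ρ) * cs.simple (r (i j)) := by
      apply comm_wordProd
      intro x hx
      rw [List.mem_map] at hx
      obtain ⟨y, hy, hyx⟩ := hx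
      rw [List.mem_range'_1] at hy
      have hyL : y < L' := by omega
      rw [← hyx, hρval y hyL]
      exact hcomm ⟨y, hyL⟩ (by simp [Fin.lt_def]; omega) (by simp [Fin.lt_def]; omega)
    rw [mul_assoc (cs.wordProd ((List.range' 0 (a + 1)).map ρ)), hcommL, ← mul_assoc]
end
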